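/- arXiv:1104.0320 — 3 statements merged into one kernel-verified Lean document; each statement's English description precedes it below -/
import Mathlib

section
/- Let v_1, v_2, v_3 be pairwise distinct primitive vectors in ℤ^n spanning a two-dimensional subspace of ℝ^n, and let a_1, a_2, a_3 be positive integers with a_1 v_1 + a_2 v_2 + a_3 v_3 = 0. Suppose b_1, b_2, b_3 are nonnegative integers, not all zero, with b_i ≤ a_i for all i and b_1 v_1 + b_2 v_2 + b_3 v_3 = 0. If some a_i equals 1, then b_j = a_j for all j. -/
/-- Trivalent vertex with an adjacent edge of multiplicity one has
multiplicity one (combinatorial core): let `v₁, v₂, v₃ ∈ ℤ^n` be pairwise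
distinct primitive vectors spanning a two-dimensional subspace of `ℝ^n`, and
let `a₁ v₁ + a₂ v₂ + a₃ v₃ = 0` with `aᵢ` positive integers.  If
`b₁ v₁ + b₂ v₂ + b₃ v₃ = 0` with `bᵢ` nonnegative integers not all zero and
`bᵢ ≤ aᵢ`, and some `aᵢ = 1`, then `b = a`. -/
theorem trivalent_multiplicity_one
    {n : ℕ} (v : Fin 3 → (Fin n → ℤ))
    (hprim : ∀ i, Finset.univ.gcd (v i) = 1)
    (hinj : Function.Injective v)
    (hspan : Module.finrank ℝ
      ↥(Submodule.span ℝ (Set.range (fun i => fun k => ((v i k : ℝ))))) = 2)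
    (a : Fin 3 → ℕ) (ha : ∀ i, 0 < a i)
    (hrel : ∑ i, (a i : ℤ) • v i = 0)
    (b : Fin 3 → ℕ) (hb : b ≠ 0) (hba : ∀ i, b i ≤ a i)
    (hrelb : ∑ i, (b i : ℤ) • v i = 0)
    (hone : ∃ i, a i = 1) :
    ∀ j, b j = a j := by
  classical
  set V : Fin 3 → (Fin n → ℝ) := fun i k => ((v i k : ℝ)) with hV
  set f : (Fin 3 → ℝ) →ₗ[ℝ] (Fin n → ℝ) := Fintype.linearCombination ℝ V with hf
  have hker : Module.finrank ℝ (LinearMap.ker f) = 1 := by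
    have h1 := LinearMap.finrank_range_add_finrank_ker f
    have h2 : LinearMap.range f = Submodule.span ℝ (Set.range V) :=
      Fintype.range_linearCombination ℝ V
    rw [h2] at h1
    have h3 : Module.finrank ℝ (Fin 3 → ℝ) = 3 := by simp
    rw [h3, hspan] at h1
    omega
  have key : ∀ (c : Fin 3 → ℕ), (∑ i, (c i : ℤ) • v i = 0) →
      f (fun i => (c i : ℝ)) = 0 := by
    intro c hc
    have : ∑ i, (c i : ℝ) • V i = 0 := by
      funext k
      have hk := congrFun hc k
      simp only [Finset.sum_apply, Pi.smul_apply, Pi.zero_apply, smul_eq_mul] at hk ⊢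
      have : ((∑ i, (c i : ℤ) * v i k : ℤ) : ℝ) = 0 := by rw [hk]; simp
      push_cast at this
      simpa [V] using this
    simpa [f, Fintype.linearCombination_apply] using this
  have haker : (fun i => ((a i : ℝ))) ∈ LinearMap.ker f := key a hrel
  have hbker : (fun i => ((b i : ℝ))) ∈ LinearMap.ker f := key b hrelb
  have hane : (⟨fun i => ((a i : ℝ)), haker⟩ : LinearMap.ker f) ≠ 0 := by
    intro h
    have := congrFun (congrArg Subtype.val h) 0
    simp at this
    exact (ha 0).ne' this
  obtain ⟨c, hc⟩ := (finrank_eq_one_iff_of_nonzero'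
    (⟨fun i => ((a i : ℝ)), haker⟩ : LinearMap.ker f) hane).mp hker
    ⟨fun i => ((b i : ℝ)), hbker⟩
  have hc' : ∀ j, c * (a j : ℝ) = (b j : ℝ) := by
    intro j
    have := congrFun (congrArg Subtype.val hc) j
    simpa using this
  obtain ⟨i, hi⟩ := hone
  have hci : c = (b i : ℝ) := by have := hc' i; rw [hi] at this; simpa using this
  have hnat : ∀ j, b j = b i * a j := by
    intro j
    have := hc' j
    rw [hci] at this
    exact_mod_cast this.symm
  have hbi : b i ≤ 1 := hi ▸ hba i
  interval_cases h : b i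
  · exfalso
    apply hb
    funext j
    have := hnat j
    simp [h] at this
    simpa using this
  · intro j
    have := hnat j
    simp [h] at this
    omega
end

section
/- Let P ⊆ ℝ^n be a nonempty polyhedron (finite intersection of closed halfspaces) that contains no affine line, and let ℓ : ℝ^n → ℝ be a linear functional that is bounded below on P. Then the infimum of ℓ over P is attained at an extreme point (vertex) of P. -/
set_option maxHeartbeats 1000000


/-- Let `P ⊆ ℝ^n` be a nonempty polyhedron (finite intersection of closed
halfspaces) containing no affine line, and let `ℓ` be a linear functional
bounded below on `P`.  Then the infimum of `ℓ` over `P` is attained at an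
extreme point (vertex) of `P`. -/
theorem linear_functional_attains_min_at_extreme_point
    {n r : ℕ} (u : Fin r → (Fin n → ℝ)) (a : Fin r → ℝ)
    (P : Set (Fin n → ℝ))
    (hP : P = {v | ∀ i, a i ≤ ∑ k, u i k * v k})
    (hne : P.Nonempty)
    (hline : ¬ ∃ v ∈ P, ∃ d : Fin n → ℝ, d ≠ 0 ∧ ∀ t : ℝ, (v + t • d) ∈ P)
    (ℓ : (Fin n → ℝ) →ₗ[ℝ] ℝ)
    (hbdd : BddBelow (ℓ '' P)) :
    ∃ w ∈ Set.extremePoints ℝ P, ∀ v ∈ P, ℓ w ≤ ℓ v := by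
  classical
  -- the constraint functionals
  set g : Fin r → ((Fin n → ℝ) →ₗ[ℝ] ℝ) :=
    fun i => ∑ k, u i k • LinearMap.proj k with hgdef
  have hg : ∀ i x, g i x = ∑ k, u i k * x k := by
    intro i x
    simp [hgdef, LinearMap.sum_apply, LinearMap.proj_apply, smul_eq_mul]
  have hPmem : ∀ v, v ∈ P ↔ ∀ i, a i ≤ g i v := by
    intro v
    rw [hP]
    simp only [Set.mem_setOf_eq]
    constructor
    · intro h i; rw [hg]; exact h i
    · intro h i; rw [← hg]; exact h i
  -- the space of directions orthogonal to all constraints tight at v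
  set W : (Fin n → ℝ) → Submodule ℝ (Fin n → ℝ) :=
    fun v => ⨅ i ∈ {i | g i v = a i}, LinearMap.ker (g i) with hWdef
  have hW : ∀ v d, d ∈ W v ↔ ∀ i, g i v = a i → g i d = 0 := by
    intro v d
    simp [hWdef, Submodule.mem_iInf, LinearMap.mem_ker]
  -- basic feasible points
  set B : Set (Fin n → ℝ) := {w | w ∈ P ∧ W w = ⊥} with hBdef
  -- basic feasible points are extreme
  have hBext : ∀ w, w ∈ B → w ∈ Set.extremePoints ℝ P := by
    rintro w ⟨hwP, hwW⟩
    rw [mem_extremePoints]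
    refine ⟨hwP, ?_⟩
    intro x hx y hy hseg
    obtain ⟨s, t, hs, ht, hst, hxy⟩ := hseg
    have hxyW : x - y ∈ W w := by
      rw [hW]
      intro i hi
      have h1 : a i ≤ g i x := (hPmem x).mp hx i
      have h2 : a i ≤ g i y := (hPmem y).mp hy i
      have h3 : s * g i x + t * g i y = a i := by
        have := congrArg (g i) hxy
        simpa [map_add, map_smul, smul_eq_mul, hi] using this
      have hsum : s * a i + t * a i = a i := by
        have : (s + t) * a i = a i := by rw [hst, one_mul]
        linarith [add_mul s t (a i)]
      have ht' : t * a i ≤ t * g i y := mul_le_mul_of_nonneg_left h2 ht.le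
      have hs' : s * a i ≤ s * g i x := mul_le_mul_of_nonneg_left h1 hs.le
      have hx' : g i x = a i := by
        refine le_antisymm ?_ h1
        exact le_of_mul_le_mul_left (by linarith) hs
      have hy' : g i y = a i := by
        refine le_antisymm ?_ h2
        exact le_of_mul_le_mul_left (by linarith) ht
      simp [map_sub, hx', hy']
    rw [hwW, Submodule.mem_bot, sub_eq_zero] at hxyW
    subst hxyW
    have hxw : x = w := by
      have : (s + t) • x = w := by rw [add_smul]; exact hxy
      simpa [hst] using this
    exact ⟨hxw, hxw⟩
  -- a ray staying in P with decreasing ℓ contradicts boundedness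
  obtain ⟨c, hc⟩ := hbdd
  have hray : ∀ v, v ∈ P → ∀ e : Fin n → ℝ, (∀ j, 0 ≤ g j e) → ℓ e < 0 → False := by
    intro v hv e hge hle
    set t : ℝ := (ℓ v - c + 1) / (-ℓ e) with htdef
    have hne' : -ℓ e > 0 := by linarith
    have hcv : c ≤ ℓ v := hc ⟨v, hv, rfl⟩
    have ht0 : 0 ≤ t := div_nonneg (by linarith) (le_of_lt hne')
    have hmem : v + t • e ∈ P := by
      rw [hPmem]
      intro j
      have h1 : a j ≤ g j v := (hPmem v).mp hv j
      have h2 : g j (v + t • e) = g j v + t * g j e := by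
        simp [map_add, map_smul, smul_eq_mul]
      nlinarith [mul_nonneg ht0 (hge j)]
    have hval : ℓ (v + t • e) = ℓ v + t * ℓ e := by
      simp [map_add, map_smul, smul_eq_mul]
    have hcancel : t * (-ℓ e) = ℓ v - c + 1 := div_mul_cancel₀ _ (ne_of_gt hne')
    have := hc ⟨v + t • e, hmem, rfl⟩
    rw [hval] at this
    nlinarith
  -- finding a good direction to move in
  have hdir : ∀ v, v ∈ P → ∀ d : Fin n → ℝ, d ∈ W v → d ≠ 0 →
      ∃ d', d' ∈ W v ∧ ℓ d' ≤ 0 ∧ ∃ j, g j d' < 0 := by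
    intro v hv d hd hd0
    by_cases h1 : ∃ j, g j d < 0
    · by_cases hl : ℓ d ≤ 0
      · exact ⟨d, hd, hl, h1⟩
      · by_cases h2 : ∃ j, g j (-d) < 0
        · refine ⟨-d, neg_mem hd, ?_, h2⟩
          simp only [map_neg, neg_nonpos]
          exact (not_le.mp hl).le
        · push_neg at h2
          exact ((hray v hv (-d) h2 (by simp only [map_neg]; linarith [not_le.mp hl]))).elim
    · push_neg at h1
      by_cases h2 : ∃ j, g j (-d) < 0
      · by_cases hl : ℓ d < 0
        · exact (hray v hv d h1 hl).elim
        · push_neg at hl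
          refine ⟨-d, neg_mem hd, ?_, h2⟩
          simp only [map_neg, neg_nonpos]
          exact hl
      · push_neg at h2
        exfalso
        apply hline
        refine ⟨v, hv, d, hd0, ?_⟩
        intro t
        rw [hPmem]
        intro j
        have hz : g j d = 0 := by
          have h2' := h2 j
          simp only [map_neg, neg_nonneg] at h2'
          exact le_antisymm (by linarith) (h1 j)
        have h1' : a j ≤ g j v := (hPmem v).mp hv j
        have : g j (v + t • d) = g j v + t * g j d := by
          simp [map_add, map_smul, smul_eq_mul]
        rw [this, hz]
        linarith
  -- moving along a direction until a new constraint becomes tight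
  have hmove : ∀ v, v ∈ P → ∀ d' : Fin n → ℝ, d' ∈ W v → (∃ j, g j d' < 0) →
      ∃ t : ℝ, 0 ≤ t ∧ v + t • d' ∈ P ∧ W (v + t • d') < W v := by
    intro v hv d' hd' hj
    set J : Finset (Fin r) := Finset.univ.filter (fun j => g j d' < 0) with hJdef
    have hJne : J.Nonempty := by
      obtain ⟨j, hj⟩ := hj
      exact ⟨j, by simp [hJdef, hj]⟩
    obtain ⟨j₀, hj₀J, hminj⟩ :=
      J.exists_min_image (fun j => (g j v - a j) / (-(g j d'))) hJne
    have hj₀ : g j₀ d' < 0 := by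
      have := Finset.mem_filter.mp hj₀J
      exact this.2
    set t : ℝ := (g j₀ v - a j₀) / (-(g j₀ d')) with htdef
    have haj₀ : a j₀ ≤ g j₀ v := (hPmem v).mp hv j₀
    have ht0 : 0 ≤ t := div_nonneg (by linarith) (by linarith)
    have hexp : ∀ j, g j (v + t • d') = g j v + t * g j d' := by
      intro j; simp [map_add, map_smul, smul_eq_mul]
    have hmemP : v + t • d' ∈ P := by
      rw [hPmem]
      intro j
      rw [hexp]
      have h1 : a j ≤ g j v := (hPmem v).mp hv j
      rcases lt_or_ge (g j d') 0 with hcj | hcj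
      · have hjJ : j ∈ J := by simp [hJdef, hcj]
        have hle := hminj j hjJ
        have hmul : t * (-(g j d')) ≤ g j v - a j := by
          rwa [le_div_iff₀ (by linarith)] at hle
        nlinarith [hmul]
      · nlinarith [mul_nonneg ht0 hcj]
    have htight : g j₀ (v + t • d') = a j₀ := by
      rw [hexp]
      have hmul : t * (-(g j₀ d')) = g j₀ v - a j₀ :=
        div_mul_cancel₀ _ (ne_of_gt (by linarith))
      nlinarith [hmul]
    refine ⟨t, ht0, hmemP, ?_⟩
    have hle : W (v + t • d') ≤ W v := by
      intro e he
      rw [hW] at he ⊢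
      intro i hi
      apply he
      rw [hexp]
      have : g i d' = 0 := (hW v d').mp hd' i hi
      rw [hi, this]
      ring
    refine lt_of_le_of_ne hle ?_
    intro heq
    have : d' ∈ W (v + t • d') := heq ▸ hd'
    have := (hW _ d').mp this j₀ htight
    linarith
  -- by induction, from any point of P we can reach a basic point without increasing ℓ
  have key : ∀ m : ℕ, ∀ v, v ∈ P → Module.finrank ℝ (W v) ≤ m →
      ∃ w, w ∈ B ∧ ℓ w ≤ ℓ v := by
    intro m
    induction m with
    | zero =>
      intro v hv hr
      have hbot : W v = ⊥ := Submodule.finrank_eq_zero.mp (Nat.le_zero.mp hr)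
      exact ⟨v, ⟨hv, hbot⟩, le_refl _⟩
    | succ m ih =>
      intro v hv hr
      by_cases hb : W v = ⊥
      · exact ⟨v, ⟨hv, hb⟩, le_refl _⟩
      · obtain ⟨d, hd, hd0⟩ := (Submodule.ne_bot_iff _).mp hb
        obtain ⟨d', hd', hld', hj⟩ := hdir v hv d hd hd0
        obtain ⟨t, ht0, hv', hlt⟩ := hmove v hv d' hd' hj
        have hr' : Module.finrank ℝ (W (v + t • d')) ≤ m := by
          have := Submodule.finrank_lt_finrank_of_lt hlt
          omega
        obtain ⟨w, hwB, hw⟩ := ih _ hv' hr'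
        refine ⟨w, hwB, ?_⟩
        have hval : ℓ (v + t • d') = ℓ v + t * ℓ d' := by
          simp [map_add, map_smul, smul_eq_mul]
        nlinarith
  -- B is finite
  have hBfin : B.Finite := by
    have hinj : Set.InjOn (fun w => (Finset.univ.filter (fun i => g i w = a i))) B := by
      rintro x ⟨hxP, hxW⟩ y ⟨hyP, hyW⟩ hxy
      have hsub : x - y ∈ W x := by
        rw [hW]
        intro i hi
        have hix : i ∈ Finset.univ.filter (fun i => g i x = a i) := by simp [hi]
        have hiy : g i y = a i := by
          dsimp only at hxy
          rw [hxy] at hix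
          simpa using hix
        simp [map_sub, hi, hiy]
      rw [hxW, Submodule.mem_bot, sub_eq_zero] at hsub
      exact hsub
    exact Set.Finite.of_finite_image (Set.toFinite _) hinj
  -- B is nonempty
  obtain ⟨v₀, hv₀⟩ := hne
  obtain ⟨w₀, hw₀B, _⟩ := key (Module.finrank ℝ (W v₀)) v₀ hv₀ le_rfl
  have hBne : B.Nonempty := ⟨w₀, hw₀B⟩
  -- take the minimizer over B
  obtain ⟨w, hwB, hwmin⟩ := Set.exists_min_image B ℓ hBfin hBne
  refine ⟨w, hBext w hwB, ?_⟩
  intro v hv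
  obtain ⟨w', hw'B, hw'⟩ := key (Module.finrank ℝ (W v)) v hv le_rfl
  exact (hwmin w' hw'B).trans hw'
end

section
/- Let P ⊆ ℝ^n be a nonempty polyhedron. Then the recession cone σ_P = {d : ∀ w ∈ P, w + d ∈ P} equals the intersection of ℝ^n × {0} with the closure in ℝ^n × ℝ of the cone {(λ v, λ) : v ∈ P, λ ≥ 0} spanned by P × {1}. -/
/-- Let `P ⊆ ℝ^n` be a nonempty polyhedron.  Then the recession cone
`σ_P = {d : ∀ w ∈ P, w + d ∈ P}` equals the intersection of `ℝ^n × {0}`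
with the closure in `ℝ^n × ℝ` of the cone `{(λv, λ) : v ∈ P, λ ≥ 0}`
spanned by `P × {1}`. -/
theorem recession_cone_eq_cone_at_infinity
    {n r : ℕ} (u : Fin r → (Fin n → ℝ)) (a : Fin r → ℝ)
    (P : Set (Fin n → ℝ))
    (hP : P = {v | ∀ i, a i ≤ ∑ k, u i k * v k})
    (hne : P.Nonempty) :
    {d : Fin n → ℝ | ∀ w ∈ P, w + d ∈ P} =
      {d : Fin n → ℝ |
        ((d, (0 : ℝ)) ∈ closure
          {p : (Fin n → ℝ) × ℝ | ∃ v ∈ P, ∃ lam : ℝ, 0 ≤ lam ∧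
            p = (lam • v, lam)})} := by
  ext d
  simp only [Set.mem_setOf_eq]
  constructor
  · intro hd
    obtain ⟨w, hw⟩ := hne
    have hiter : ∀ m : ℕ, w + (m : ℝ) • d ∈ P := by
      intro m
      induction m with
      | zero => simpa using hw
      | succ m ih =>
        have h := hd _ ih
        have : w + ((m : ℝ) + 1) • d = (w + (m : ℝ) • d) + d := by
          rw [add_smul, one_smul, add_assoc]
        push_cast
        rw [this]
        exact h
    have h0 : Filter.Tendsto (fun m : ℕ => (1 : ℝ) / (m + 1)) Filter.atTop (nhds 0) :=
      tendsto_one_div_add_atTop_nhds_zero_nat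
    have h1 : Filter.Tendsto (fun m : ℕ => ((1 : ℝ) / (m + 1)) • (w + ((m : ℝ) + 1) • d))
        Filter.atTop (nhds d) := by
      have heq : (fun m : ℕ => ((1 : ℝ) / (m + 1)) • (w + ((m : ℝ) + 1) • d)) =
          fun m : ℕ => ((1 : ℝ) / (m + 1)) • w + d := by
        funext m
        rw [smul_add, smul_smul, div_mul_cancel₀, one_smul]
        positivity
      rw [heq]
      have := (h0.smul_const w).add_const d
      simpa using this
    have key : Filter.Tendsto (fun m : ℕ =>
        ((((1 : ℝ) / (m + 1)) • (w + ((m : ℝ) + 1) • d), (1 : ℝ) / (m + 1)))) Filter.atTop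
        (nhds (d, 0)) := h1.prodMk_nhds h0
    refine mem_closure_of_tendsto key ?_
    filter_upwards with m
    refine ⟨w + ((m : ℝ) + 1) • d, ?_, 1 / (m + 1), by positivity, rfl⟩
    have := hiter (m + 1)
    push_cast at this
    exact this
  · intro hd w hw
    subst hP
    intro i
    have hsub : closure {p : (Fin n → ℝ) × ℝ | ∃ v ∈ {v | ∀ i, a i ≤ ∑ k, u i k * v k},
        ∃ lam : ℝ, 0 ≤ lam ∧ p = (lam • v, lam)} ⊆
        {p : (Fin n → ℝ) × ℝ | a i * p.2 ≤ ∑ k, u i k * p.1 k} := by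
      apply closure_minimal
      · rintro p ⟨v, hv, lam, hlam, rfl⟩
        have hvi := hv i
        simp only [Set.mem_setOf_eq, Pi.smul_apply, smul_eq_mul]
        calc a i * lam ≤ (∑ k, u i k * v k) * lam :=
              mul_le_mul_of_nonneg_right hvi hlam
          _ = ∑ k, u i k * (lam * v k) := by
              rw [Finset.sum_mul]; exact Finset.sum_congr rfl fun k _ => by ring
      · apply isClosed_le
        · exact continuous_const.mul continuous_snd
        · exact continuous_finset_sum _ fun k _ =>
            continuous_const.mul ((continuous_apply k).comp continuous_fst)
    have h := hsub hd
    simp only [Set.mem_setOf_eq, mul_zero] at h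
    have hwa := hw i
    have hsum : ∑ k, u i k * (w + d) k = (∑ k, u i k * w k) + ∑ k, u i k * d k := by
      rw [← Finset.sum_add_distrib]
      exact Finset.sum_congr rfl fun k _ => by simp [mul_add]
    rw [hsum]
    linarith
end
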